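/- Let p, ξ be real numbers with 0 ≤ p ≤ 1 and 0 ≤ ξ ≤ 1, and let J := ρ_sim(p,ξ) − ρ_p, a Hermitian 4×4 matrix. Then the partial trace of the absolute value of J over the second tensor factor is a scalar matrix: the 2×2 matrix with entries (a,b) ↦ ∑_{k} (√(JᴴJ))((a,k),(b,k)) equals (ξ/8)·(2(1−p) + a₋ + a₊)·I₂, where a₊ := √(1−p)·√(5 + 4√(1−p) − p), a₋ := √(1−p)·√(5 − 4√(1−p) − p), and I₂ is the 2×2 identity matrix. -/

import Mathlib

open Matrix
open scoped ComplexOrder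

open Classical in
/-- Positive semidefinite square root of a matrix (zero if not PSD). -/
noncomputable def msqrt {n : Type*} [Fintype n] [DecidableEq n] (A : Matrix n n ℂ) :
    Matrix n n ℂ :=
  if h : A.PosSemidef then
    h.1.eigenvectorUnitary.1 * diagonal ((↑) ∘ (√·) ∘ h.1.eigenvalues) *
      (star h.1.eigenvectorUnitary : Matrix n n ℂ)
  else 0

/-- Reindex a 4×4 matrix by pairs of qubit indices, with ordering 00,01,10,11. -/
def toPair (A : Matrix (Fin 4) (Fin 4) ℂ) :
    Matrix (Fin 2 × Fin 2) (Fin 2 × Fin 2) ℂ :=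
  Matrix.reindex finProdFinEquiv.symm finProdFinEquiv.symm A

/-- Choi matrix of the amplitude damping channel with damping probability `p`
(rows/columns ordered 00,01,10,11). -/
noncomputable def rhoAD (p : ℝ) : Matrix (Fin 2 × Fin 2) (Fin 2 × Fin 2) ℂ :=
  toPair !![1 / 2, 0, 0, (Real.sqrt (1 - p) : ℂ) / 2;
            0, 0, 0, 0;
            0, 0, (p : ℂ) / 2, 0;
            (Real.sqrt (1 - p) : ℂ) / 2, 0, 0, ((1 - p : ℝ) : ℂ) / 2]

/-- Choi matrix of the M-port PBT simulation of the amplitude damping channel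
(rows/columns ordered 00,01,10,11). -/
noncomputable def rhoSim (p ξ : ℝ) : Matrix (Fin 2 × Fin 2) (Fin 2 × Fin 2) ℂ :=
  toPair !![((1 / 2 - (1 - p) * ξ / 4 : ℝ) : ℂ), 0, 0,
              ((Real.sqrt (1 - p) * (1 / 2 - ξ / 2) : ℝ) : ℂ);
            0, (((1 - p) * ξ / 4 : ℝ) : ℂ), 0, 0;
            0, 0, (((1 / 2 - ξ / 4) * p + ξ / 4 : ℝ) : ℂ), 0;
            ((Real.sqrt (1 - p) * (1 / 2 - ξ / 2) : ℝ) : ℂ), 0, 0,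
              (((1 / 2 - ξ / 4) * (1 - p) : ℝ) : ℂ)]

set_option maxHeartbeats 2000000 in
theorem partial_trace_abs_sim_minus_ad_scalar (p ξ : ℝ)
    (hp0 : 0 ≤ p) (hp1 : p ≤ 1) (hξ0 : 0 ≤ ξ) (hξ1 : ξ ≤ 1)
    (J : Matrix (Fin 2 × Fin 2) (Fin 2 × Fin 2) ℂ) (hJ : J = rhoSim p ξ - rhoAD p) :
    (Matrix.of fun a b : Fin 2 => ∑ k : Fin 2, msqrt (Jᴴ * J) (a, k) (b, k)) =
      ((ξ / 8 * (2 * (1 - p) +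
          Real.sqrt (1 - p) * Real.sqrt (5 - 4 * Real.sqrt (1 - p) - p) +
          Real.sqrt (1 - p) * Real.sqrt (5 + 4 * Real.sqrt (1 - p) - p)) : ℝ) : ℂ) •
        (1 : Matrix (Fin 2) (Fin 2) ℂ) := by
  subst hJ
  have h1p : (0:ℝ) ≤ 1 - p := by linarith
  set s := Real.sqrt (1 - p) with hs
  have hs0 : 0 ≤ s := Real.sqrt_nonneg _
  have hs2 : s * s = 1 - p := Real.mul_self_sqrt h1p
  have hs1 : s ≤ 1 := by nlinarith
  set q1 := Real.sqrt (ξ*s*(2-s)/8) with hq1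
  set q2 := Real.sqrt (ξ*s*(2+s)/8) with hq2
  set q3 := Real.sqrt (ξ*(1-p)/4) with hq3
  have hq1s : q1 * q1 = ξ*s*(2-s)/8 :=
    Real.mul_self_sqrt (div_nonneg (mul_nonneg (mul_nonneg hξ0 hs0) (by linarith)) (by norm_num))
  have hq2s : q2 * q2 = ξ*s*(2+s)/8 :=
    Real.mul_self_sqrt (div_nonneg (mul_nonneg (mul_nonneg hξ0 hs0) (by linarith)) (by norm_num))
  have hq3s : q3 * q3 = ξ*(1-p)/4 :=
    Real.mul_self_sqrt (div_nonneg (mul_nonneg hξ0 h1p) (by norm_num))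
  have hs2' : ξ*(s*s) = ξ*(1-p) := by rw [hs2]
  set J := rhoSim p ξ - rhoAD p with hJ
  set M : Matrix (Fin 2 × Fin 2) (Fin 2 × Fin 2) ℂ :=
    toPair !![((ξ*s/2 : ℝ):ℂ), 0, 0, ((ξ*(1-p)/4 : ℝ):ℂ);
              0, ((ξ*(1-p)/4 : ℝ):ℂ), 0, 0;
              0, 0, ((ξ*(1-p)/4 : ℝ):ℂ), 0;
              ((ξ*(1-p)/4 : ℝ):ℂ), 0, 0, ((ξ*s/2 : ℝ):ℂ)] with hM
  set C : Matrix (Fin 2 × Fin 2) (Fin 2 × Fin 2) ℂ :=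
    toPair !![(q1:ℂ), 0, 0, -(q1:ℂ);
              (q2:ℂ), 0, 0, (q2:ℂ);
              0, (q3:ℂ), 0, 0;
              0, 0, (q3:ℂ), 0] with hC
  have hCM : Cᴴ * C = M := by
    ext ⟨i,k⟩ ⟨j,l⟩
    fin_cases i <;> fin_cases k <;> fin_cases j <;> fin_cases l <;>
      simp [hM, hC, Matrix.mul_apply, Fintype.sum_prod_type, Fin.sum_univ_two,
          conjTranspose_apply, toPair, finProdFinEquiv, Fin.ext_iff, Complex.conj_ofReal,
          Matrix.vecHead, Matrix.vecTail,
          ← Complex.ofReal_mul, ← Complex.ofReal_neg, ← Complex.ofReal_add] <;>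
      norm_cast <;>
      simp -failIfUnchanged only [← Complex.ofReal_ofNat, ← Complex.ofReal_div, Complex.ofReal_inj] <;>
      linarith [hq1s, hq2s, hq3s, hs2']
  have hMpsd : M.PosSemidef := hCM ▸ Matrix.posSemidef_conjTranspose_mul_self C
  have hA : (Jᴴ * J).PosSemidef := Matrix.posSemidef_conjTranspose_mul_self J
  have hsq : M ^ 2 = Jᴴ * J := by
    rw [pow_two]
    ext ⟨i,k⟩ ⟨j,l⟩
    fin_cases i <;> fin_cases k <;> fin_cases j <;> fin_cases l <;>
      simp [hM, hJ, rhoSim, rhoAD, Matrix.mul_apply, Fintype.sum_prod_type,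
          Fin.sum_univ_two, conjTranspose_apply, Matrix.sub_apply, toPair,
          finProdFinEquiv, Fin.ext_iff, Complex.conj_ofReal, map_div₀, map_ofNat,
          Matrix.vecHead, Matrix.vecTail, ← hs] <;>
      push_cast <;>
      ring
  have hmsq : msqrt (Jᴴ * J) = M := by
    open scoped MatrixOrder in
    have h2 : CFC.sqrt (Jᴴ * J) = M := by
      exact CFC.sqrt_unique (by rw [← pow_two]; exact hsq) (Matrix.nonneg_iff_posSemidef.mpr hMpsd)
    rw [← h2, CFC.sqrt_eq_cfc, cfc_nnreal_eq_real _ _, hA.1.cfc_eq, msqrt, dif_pos hA]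
    simp only [IsHermitian.cfc, Unitary.conjStarAlgAut_apply]
    congr 3
    funext i
    simp [Real.coe_sqrt, Real.coe_toNNReal', max_eq_left (hA.eigenvalues_nonneg i)]
  rw [hmsq]
  have e1 : Real.sqrt (5 - 4*s - p) = 2 - s := by
    rw [show (5 - 4*s - p) = (2-s)^2 by nlinarith]
    exact Real.sqrt_sq (by linarith)
  have e2 : Real.sqrt (5 + 4*s - p) = 2 + s := by
    rw [show (5 + 4*s - p) = (2+s)^2 by nlinarith]
    exact Real.sqrt_sq (by linarith)
  ext a b
  fin_cases a <;> fin_cases b <;>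
    simp [hM, Matrix.of_apply, Fin.sum_univ_two, toPair, finProdFinEquiv,
        Fin.ext_iff, Matrix.smul_apply, Matrix.one_apply, e1, e2,
        Matrix.vecHead, Matrix.vecTail,
        ← Complex.ofReal_mul, ← Complex.ofReal_add] <;>
    norm_cast <;>
    push_cast <;>
    ring
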